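/- Let h_0, h_1 be i.i.d. Gamma(m, 1/m) random variables with m ≥ 1. Then lim_{θ → ∞} θ^m P(h_0 / h_1 > θ) = Γ(2m) / (m Γ(m)^2); in particular P(h_0/h_1 > θ) = Θ(θ^{-m}) as θ → ∞. -/

import Mathlib

open MeasureTheory ProbabilityTheory Real Filter Set
open scoped ENNReal NNReal

namespace Stmt16

noncomputable def F (m u : ℝ) : ℝ := ((gammaMeasure m m) (Ioo 0 u)).toReal

noncomputable def C (m : ℝ) : ℝ := m ^ m / Real.Gamma m

variable {m : ℝ}

lemma C_pos (hm : 0 < m) : 0 < C m :=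
  div_pos (rpow_pos_of_pos hm m) (Gamma_pos_of_pos hm)

lemma gamma_Iic_null (hm : 0 < m) : (gammaMeasure m m) (Iic 0) = 0 := by
  rw [gammaMeasure, withDensity_apply _ measurableSet_Iic,
    ← setLIntegral_congr (Iio_ae_eq_Iic (a := (0:ℝ)))]
  exact lintegral_gammaPDF_of_nonpos le_rfl

lemma gamma_ae_pos (hm : 0 < m) : ∀ᵐ x ∂(gammaMeasure m m), 0 < x := by
  rw [ae_iff]
  have h : {x : ℝ | ¬ 0 < x} = Iic 0 := by ext x; simp
  rw [h]; exact gamma_Iic_null hm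

lemma measure_eq_inter_Ioi (hm : 0 < m) (s : Set ℝ) :
    (gammaMeasure m m) s = (gammaMeasure m m) (s ∩ Ioi 0) := by
  refine le_antisymm ?_ (measure_mono inter_subset_left)
  have hnull : (gammaMeasure m m) (s \ Ioi 0) = 0 := by
    refine measure_mono_null ?_ (gamma_Iic_null hm)
    intro x hx
    simp only [mem_diff, mem_Ioi, not_lt] at hx
    exact hx.2
  calc (gammaMeasure m m) s
      ≤ (gammaMeasure m m) (s ∩ Ioi 0) + (gammaMeasure m m) (s \ Ioi 0) :=
        measure_le_inter_add_diff (gammaMeasure m m) s (Ioi 0)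
    _ = (gammaMeasure m m) (s ∩ Ioi 0) := by rw [hnull, add_zero]

lemma slice_eq (hm : 0 < m) {θ : ℝ} (hθ : 0 < θ) (x : ℝ) :
    (gammaMeasure m m) {y | θ < x / y} = (gammaMeasure m m) (Ioo 0 (x / θ)) := by
  rw [measure_eq_inter_Ioi hm]
  congr 1
  ext y
  simp only [mem_inter_iff, mem_setOf_eq, mem_Ioi, mem_Ioo]
  constructor
  · rintro ⟨h1, h2⟩
    exact ⟨h2, (lt_div_iff₀ hθ).2 (by rw [mul_comm]; exact (lt_div_iff₀ h2).1 h1)⟩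
  · rintro ⟨h2, h1⟩
    exact ⟨(lt_div_iff₀ h2).2 (by rw [mul_comm]; exact (lt_div_iff₀ hθ).1 h1), h2⟩

lemma integrable_pdf (hm : 0 < m) : Integrable (gammaPDFReal m m) := by
  refine ⟨(measurable_gammaPDFReal m m).aestronglyMeasurable, ?_⟩
  rw [hasFiniteIntegral_iff_ofReal (ae_of_all _ (gammaPDFReal_nonneg hm hm))]
  have : (fun a => ENNReal.ofReal (gammaPDFReal m m a)) = gammaPDF m m := rfl
  rw [this, lintegral_gammaPDF_eq_one hm hm]
  exact ENNReal.one_lt_top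

lemma F_eq (hm : 0 < m) (u : ℝ) :
    F m u = ∫ y in Ioo 0 u, gammaPDFReal m m y := by
  rw [F, gammaMeasure, withDensity_apply _ measurableSet_Ioo]
  have : (gammaPDF m m) = (fun a => ENNReal.ofReal (gammaPDFReal m m a)) := rfl
  rw [this, ← ofReal_integral_eq_lintegral_ofReal ((integrable_pdf hm).restrict)
    (ae_of_all _ (gammaPDFReal_nonneg hm hm)),
    ENNReal.toReal_ofReal (integral_nonneg (gammaPDFReal_nonneg hm hm))]

lemma F_nonneg {u : ℝ} : 0 ≤ F m u := ENNReal.toReal_nonneg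

lemma F_le_one (hm : 0 < m) (u : ℝ) : F m u ≤ 1 := by
  have : IsProbabilityMeasure (gammaMeasure m m) := isProbabilityMeasure_gammaMeasure hm hm
  have h := prob_le_one (μ := gammaMeasure m m) (s := Ioo 0 u)
  simpa [F] using ENNReal.toReal_mono ENNReal.one_ne_top h

lemma F_mono (hm : 0 < m) : Monotone (F m) := by
  have : IsProbabilityMeasure (gammaMeasure m m) := isProbabilityMeasure_gammaMeasure hm hm
  intro u v huv
  exact ENNReal.toReal_mono (measure_ne_top _ _) (measure_mono (Ioo_subset_Ioo le_rfl huv))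

lemma F_measurable (hm : 0 < m) : Measurable (F m) := (F_mono hm).measurable

lemma integrableOn_rpow_Ioo {p : ℝ} (hp : -1 < p) (u : ℝ) :
    IntegrableOn (fun y : ℝ => y ^ p) (Ioo 0 u) := by
  exact ((intervalIntegral.intervalIntegrable_rpow' hp (a := 0) (b := u)).1).mono_set
    Ioo_subset_Ioc_self

lemma integral_rpow_Ioo {p : ℝ} (hp : -1 < p) {u : ℝ} (hu : 0 ≤ u) :
    ∫ y in Ioo 0 u, y ^ p = u ^ (p + 1) / (p + 1) := by
  rw [← integral_Ioc_eq_integral_Ioo, ← intervalIntegral.integral_of_le hu,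
    integral_rpow (Or.inl hp), Real.zero_rpow (by linarith), sub_zero]

lemma F_le (hm : 1 ≤ m) {u : ℝ} (hu : 0 ≤ u) : F m u ≤ C m * (u ^ m / m) := by
  have hm0 : 0 < m := lt_of_lt_of_le one_pos hm
  rw [F_eq hm0]
  have h1 : ∀ y ∈ Ioo (0:ℝ) u, gammaPDFReal m m y ≤ C m * y ^ (m - 1) := by
    intro y hy
    rw [gammaPDFReal, if_pos hy.1.le]
    have he : exp (-(m * y)) ≤ 1 :=
      exp_le_one_iff.2 (neg_nonpos.mpr (mul_nonneg hm0.le hy.1.le))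
    have hC : (0:ℝ) ≤ m ^ m / Gamma m * y ^ (m - 1) := by
      have := C_pos hm0
      have := Real.rpow_nonneg hy.1.le (m - 1)
      simp only [C] at *
      positivity
    calc m ^ m / Gamma m * y ^ (m - 1) * exp (-(m * y))
        ≤ m ^ m / Gamma m * y ^ (m - 1) * 1 := by
          exact mul_le_mul_of_nonneg_left he hC
      _ = C m * y ^ (m - 1) := by rw [mul_one]; rfl
  calc ∫ y in Ioo 0 u, gammaPDFReal m m y
      ≤ ∫ y in Ioo 0 u, C m * y ^ (m - 1) :=
        setIntegral_mono_on ((integrable_pdf hm0).restrict)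
          ((integrableOn_rpow_Ioo (by linarith) u).const_mul _) measurableSet_Ioo h1
    _ = C m * (u ^ m / m) := by
        rw [integral_const_mul, integral_rpow_Ioo (by linarith) hu, sub_add_cancel]

lemma F_ge (hm : 1 ≤ m) {u : ℝ} (hu : 0 ≤ u) :
    C m * (u ^ m / m) - C m * m * (u ^ (m + 1) / (m + 1)) ≤ F m u := by
  have hm0 : 0 < m := lt_of_lt_of_le one_pos hm
  rw [F_eq hm0]
  have h1 : ∀ y ∈ Ioo (0:ℝ) u, C m * y ^ (m - 1) - C m * m * y ^ m ≤ gammaPDFReal m m y := by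
    intro y hy
    rw [gammaPDFReal, if_pos hy.1.le]
    have hy0 : (0:ℝ) < y := hy.1
    have he : 1 - m * y ≤ exp (-(m * y)) := by
      have := Real.add_one_le_exp (-(m * y)); linarith
    have hpow : y ^ m = y ^ (m - 1) * y := by
      have := Real.rpow_add_one hy0.ne' (m - 1)
      rwa [sub_add_cancel] at this
    have hC : (0:ℝ) ≤ C m * y ^ (m - 1) :=
      mul_nonneg (C_pos hm0).le (Real.rpow_nonneg hy0.le _)
    calc C m * y ^ (m - 1) - C m * m * y ^ m
        = C m * y ^ (m - 1) * (1 - m * y) := by rw [hpow]; ring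
      _ ≤ C m * y ^ (m - 1) * exp (-(m * y)) := mul_le_mul_of_nonneg_left he hC
      _ = m ^ m / Gamma m * y ^ (m - 1) * exp (-(m * y)) := by rw [C]
  calc C m * (u ^ m / m) - C m * m * (u ^ (m + 1) / (m + 1))
      = ∫ y in Ioo 0 u, (C m * y ^ (m - 1) - C m * m * y ^ m) := by
        rw [integral_sub (((integrableOn_rpow_Ioo (by linarith) u)).const_mul _)
          (((integrableOn_rpow_Ioo (by linarith : (-1:ℝ) < m) u)).const_mul _),
          integral_const_mul, integral_const_mul,
          integral_rpow_Ioo (by linarith) hu, integral_rpow_Ioo (by linarith : (-1:ℝ) < m) hu,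
          sub_add_cancel]
    _ ≤ ∫ y in Ioo 0 u, gammaPDFReal m m y :=
        setIntegral_mono_on
          ((((integrableOn_rpow_Ioo (by linarith) u)).const_mul _).sub
            (((integrableOn_rpow_Ioo (by linarith : (-1:ℝ) < m) u)).const_mul _))
          ((integrable_pdf hm0).restrict) measurableSet_Ioo h1

lemma mul_upper (hm : 1 ≤ m) {θ x : ℝ} (hθ : 0 < θ) (hx : 0 ≤ x) :
    θ ^ m * F m (x / θ) ≤ C m * x ^ m / m := by
  have hm0 : 0 < m := lt_of_lt_of_le one_pos hm
  have hθm : (0:ℝ) < θ ^ m := rpow_pos_of_pos hθ m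
  calc θ ^ m * F m (x / θ) ≤ θ ^ m * (C m * ((x / θ) ^ m / m)) :=
        mul_le_mul_of_nonneg_left (F_le hm (div_nonneg hx hθ.le)) hθm.le
    _ = C m * x ^ m / m := by
        rw [div_rpow hx hθ.le]
        field_simp

lemma mul_lower (hm : 1 ≤ m) {θ x : ℝ} (hθ : 0 < θ) (hx : 0 ≤ x) :
    C m * x ^ m / m - C m * m * x ^ (m + 1) / ((m + 1) * θ) ≤ θ ^ m * F m (x / θ) := by
  have hm0 : 0 < m := lt_of_lt_of_le one_pos hm
  have hθm : (0:ℝ) < θ ^ m := rpow_pos_of_pos hθ m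
  have h2 := mul_le_mul_of_nonneg_left (F_ge hm (div_nonneg hx hθ.le)) hθm.le
  refine le_trans (le_of_eq ?_) h2
  rw [div_rpow hx hθ.le, div_rpow hx hθ.le, Real.rpow_add_one hθ.ne' m]
  have h3 : θ ^ m ≠ 0 := hθm.ne'
  have h4 : m + 1 ≠ 0 := by linarith
  field_simp

lemma tendsto_pt (hm : 1 ≤ m) {x : ℝ} (hx : 0 ≤ x) :
    Tendsto (fun θ : ℝ => θ ^ m * F m (x / θ)) atTop (nhds (C m * x ^ m / m)) := by
  have hm0 : 0 < m := lt_of_lt_of_le one_pos hm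
  rw [tendsto_iff_dist_tendsto_zero]
  have hK : Tendsto (fun θ : ℝ => C m * m * x ^ (m + 1) / (m + 1) / θ) atTop (nhds 0) :=
    Tendsto.div_atTop tendsto_const_nhds tendsto_id
  refine squeeze_zero' (.of_forall fun θ => dist_nonneg) ?_ hK
  filter_upwards [eventually_gt_atTop 0] with θ hθ
  rw [Real.dist_eq, abs_le]
  constructor
  · have := mul_lower hm hθ hx
    rw [div_div] at *
    linarith [mul_lower hm hθ hx]
  · have h1 := mul_upper hm hθ hx
    have h2 : 0 ≤ C m * m * x ^ (m + 1) / (m + 1) / θ := by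
      have := C_pos hm0
      have := Real.rpow_nonneg hx (m + 1)
      positivity
    linarith

lemma integrableOn_aux (hm : 0 < m) :
    IntegrableOn (fun x : ℝ => x ^ (2 * m - 1) * exp (-(m * x))) (Ioi 0) := by
  have h := integrableOn_rpow_mul_exp_neg_mul_rpow (p := 1) (s := 2 * m - 1) (b := m)
    (by linarith) one_pos hm
  refine h.congr_fun ?_ measurableSet_Ioi
  intro x hx
  simp only [Real.rpow_one]
  ring_nf

lemma integrand_eq (hm : 0 < m) {x : ℝ} (hx : 0 < x) :
    C m * x ^ m / m * gammaPDFReal m m x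
      = C m ^ 2 / m * (x ^ (2 * m - 1) * exp (-(m * x))) := by
  rw [gammaPDFReal, if_pos hx.le]
  have hpow : x ^ m * x ^ (m - 1) = x ^ (2 * m - 1) := by
    rw [← Real.rpow_add hx]; ring_nf
  have hC : (m : ℝ) ^ m / Gamma m = C m := rfl
  rw [hC, ← hpow]
  ring

lemma integrable_bound (hm : 1 ≤ m) :
    Integrable (fun x : ℝ => C m * x ^ m / m) (gammaMeasure m m) := by
  have hm0 : 0 < m := lt_of_lt_of_le one_pos hm
  have hpdf : gammaPDF m m = fun x => ENNReal.ofReal (gammaPDFReal m m x) := rfl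
  rw [gammaMeasure, hpdf, integrable_withDensity_iff ((measurable_gammaPDFReal m m).ennreal_ofReal)
    (ae_of_all _ fun x => ENNReal.ofReal_lt_top)]
  have heq : (fun x : ℝ => C m * x ^ m / m * (ENNReal.ofReal (gammaPDFReal m m x)).toReal)
      = (Ioi (0:ℝ)).indicator (fun x => C m ^ 2 / m * (x ^ (2 * m - 1) * exp (-(m * x)))) := by
    funext x
    rw [ENNReal.toReal_ofReal (gammaPDFReal_nonneg hm0 hm0 x)]
    rcases lt_trichotomy x 0 with h | h | h
    · rw [indicator_of_notMem (by simp [not_lt, h.le])]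
      rw [gammaPDFReal, if_neg (not_le.mpr h)]
      ring
    · subst h
      rw [indicator_of_notMem (by simp)]
      rw [Real.zero_rpow hm0.ne']
      ring
    · rw [indicator_of_mem (mem_Ioi.mpr h), integrand_eq hm0 h]
  rw [heq]
  exact MeasureTheory.IntegrableOn.integrable_indicator
    ((integrableOn_aux hm0).const_mul _) measurableSet_Ioi

lemma integral_bound_eq (hm : 1 ≤ m) :
    ∫ x, C m * x ^ m / m ∂(gammaMeasure m m)
      = Real.Gamma (2 * m) / (m * Real.Gamma m ^ 2) := by
  have hm0 : 0 < m := lt_of_lt_of_le one_pos hm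
  have h0 : gammaMeasure m m
      = volume.withDensity (fun x => ((gammaPDFReal m m x).toNNReal : ℝ≥0∞)) := rfl
  rw [h0, integral_withDensity_eq_integral_smul ((measurable_gammaPDFReal m m).real_toNNReal)]
  have heq : (fun x : ℝ => (gammaPDFReal m m x).toNNReal • (C m * x ^ m / m))
      = (Ioi (0:ℝ)).indicator (fun x => C m ^ 2 / m * (x ^ (2 * m - 1) * exp (-(m * x)))) := by
    funext x
    rw [NNReal.smul_def, Real.coe_toNNReal _ (gammaPDFReal_nonneg hm0 hm0 x)]
    rcases lt_trichotomy x 0 with h | h | h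
    · rw [indicator_of_notMem (by simp [not_lt, h.le])]
      rw [gammaPDFReal, if_neg (not_le.mpr h)]
      simp
    · subst h
      rw [indicator_of_notMem (by simp)]
      rw [Real.zero_rpow hm0.ne']
      simp
    · rw [indicator_of_mem (mem_Ioi.mpr h), smul_eq_mul, ← integrand_eq hm0 h]
      ring
  rw [heq, integral_indicator measurableSet_Ioi, integral_const_mul,
    integral_rpow_mul_exp_neg_mul_Ioi (by linarith) hm0]
  have hA : (0:ℝ) < m ^ m := rpow_pos_of_pos hm0 m
  have hG : (0:ℝ) < Gamma m := Gamma_pos_of_pos hm0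
  have h2 : m ^ (2 * m) = m ^ m * m ^ m := by rw [two_mul, Real.rpow_add hm0]
  have h3 : ((1:ℝ) / m) ^ (2 * m) = 1 / (m ^ m * m ^ m) := by
    rw [div_rpow zero_le_one hm0.le, one_rpow, h2]
  rw [h3]
  simp only [C]
  field_simp

end Stmt16

open Stmt16

/-- For i.i.d. h₀, h₁ ~ Gamma(m, rate m), m ≥ 1:
    lim_{θ→∞} θ^m P(h₀/h₁ > θ) = Γ(2m)/(m Γ(m)²); in particular Θ(θ^{-m}). -/
theorem stmt_16 {Ω : Type*} [MeasureSpace Ω] [IsProbabilityMeasure (ℙ : Measure Ω)]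
    (m : ℝ) (hm : 1 ≤ m)
    (h₀ h₁ : Ω → ℝ) (hmeas₀ : Measurable h₀) (hmeas₁ : Measurable h₁)
    (hdist₀ : Measure.map h₀ ℙ = gammaMeasure m m)
    (hdist₁ : Measure.map h₁ ℙ = gammaMeasure m m)
    (hindep : IndepFun h₀ h₁ ℙ) :
    Tendsto (fun θ : ℝ => θ ^ m * (ℙ {ω | θ < h₀ ω / h₁ ω}).toReal) atTop
        (nhds (Real.Gamma (2 * m) / (m * Real.Gamma m ^ 2))) ∧
      ∃ c₁ c₂ : ℝ, 0 < c₁ ∧ 0 < c₂ ∧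
        ∀ᶠ θ : ℝ in atTop,
          c₁ * θ ^ (-m) ≤ (ℙ {ω | θ < h₀ ω / h₁ ω}).toReal ∧
            (ℙ {ω | θ < h₀ ω / h₁ ω}).toReal ≤ c₂ * θ ^ (-m) := by
  have hm0 : 0 < m := lt_of_lt_of_le one_pos hm
  set γ := gammaMeasure m m with hγ
  have hPγ : IsProbabilityMeasure γ := isProbabilityMeasure_gammaMeasure hm0 hm0
  have hmap : Measure.map (fun ω => (h₀ ω, h₁ ω)) ℙ = γ.prod γ := by
    have h := (ProbabilityTheory.indepFun_iff_map_prod_eq_prod_map_map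
      hmeas₀.aemeasurable hmeas₁.aemeasurable).mp hindep
    rw [h, hdist₀, hdist₁]
  have hprob : ∀ θ : ℝ, 0 < θ →
      (ℙ {ω | θ < h₀ ω / h₁ ω}).toReal = ∫ x, F m (x / θ) ∂γ := by
    intro θ hθ
    have hS : MeasurableSet {p : ℝ × ℝ | θ < p.1 / p.2} :=
      measurableSet_lt measurable_const (measurable_fst.div measurable_snd)
    have h1 : ℙ {ω | θ < h₀ ω / h₁ ω} = (γ.prod γ) {p : ℝ × ℝ | θ < p.1 / p.2} := by
      rw [← hmap, Measure.map_apply (hmeas₀.prodMk hmeas₁) hS]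
      rfl
    rw [h1, Measure.prod_apply hS]
    have h2 : ∀ x : ℝ, γ (Prod.mk x ⁻¹' {p : ℝ × ℝ | θ < p.1 / p.2})
        = ENNReal.ofReal (F m (x / θ)) := by
      intro x
      have hx : Prod.mk x ⁻¹' {p : ℝ × ℝ | θ < p.1 / p.2} = {y | θ < x / y} := rfl
      rw [hx, hγ, slice_eq hm0 hθ x, ← hγ]
      exact (ENNReal.ofReal_toReal (measure_ne_top γ _)).symm
    simp_rw [h2]
    have hFint : Integrable (fun x => F m (x / θ)) γ := by
      refine Integrable.mono' (integrable_const 1)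
        (((F_measurable hm0).comp (measurable_id.div_const θ)).aestronglyMeasurable) ?_
      exact ae_of_all _ fun x => by
        rw [Real.norm_eq_abs, abs_of_nonneg F_nonneg]
        exact F_le_one hm0 _
    rw [← ofReal_integral_eq_lintegral_ofReal hFint (ae_of_all _ fun x => F_nonneg),
      ENNReal.toReal_ofReal (integral_nonneg fun x => F_nonneg)]
  -- part 1
  have hmain : Tendsto (fun θ : ℝ => θ ^ m * (ℙ {ω | θ < h₀ ω / h₁ ω}).toReal) atTop
      (nhds (Real.Gamma (2 * m) / (m * Real.Gamma m ^ 2))) := by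
    have hdct : Tendsto (fun θ : ℝ => ∫ x, θ ^ m * F m (x / θ) ∂γ) atTop
        (nhds (∫ x, C m * x ^ m / m ∂γ)) := by
      apply tendsto_integral_filter_of_dominated_convergence (fun x => C m * x ^ m / m)
      · exact .of_forall fun θ =>
          (((F_measurable hm0).comp (measurable_id.div_const θ)).const_mul _).aestronglyMeasurable
      · filter_upwards [eventually_gt_atTop 0] with θ hθ
        filter_upwards [gamma_ae_pos hm0] with x hx
        rw [Real.norm_eq_abs, abs_of_nonneg
          (mul_nonneg (rpow_pos_of_pos hθ m).le F_nonneg)]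
        exact mul_upper hm hθ hx.le
      · exact integrable_bound hm
      · filter_upwards [gamma_ae_pos hm0] with x hx
        exact tendsto_pt hm hx.le
    rw [integral_bound_eq hm] at hdct
    apply hdct.congr'
    filter_upwards [eventually_gt_atTop 0] with θ hθ
    rw [integral_const_mul, ← hprob θ hθ]
  refine ⟨hmain, ?_⟩
  set L := Real.Gamma (2 * m) / (m * Real.Gamma m ^ 2) with hLdef
  have hL : 0 < L := div_pos (Gamma_pos_of_pos (by linarith))
    (mul_pos hm0 (pow_pos (Gamma_pos_of_pos hm0) 2))
  refine ⟨L / 2, 2 * L, by linarith, by linarith, ?_⟩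
  have hub : ∀ᶠ θ : ℝ in atTop, θ ^ m * (ℙ {ω | θ < h₀ ω / h₁ ω}).toReal < 2 * L :=
    hmain.eventually_lt_const (by linarith)
  have hlb : ∀ᶠ θ : ℝ in atTop, L / 2 < θ ^ m * (ℙ {ω | θ < h₀ ω / h₁ ω}).toReal :=
    hmain.eventually_const_lt (by linarith)
  filter_upwards [hub, hlb, eventually_gt_atTop 0] with θ h2 h3 hθ
  have hθm : (0:ℝ) < θ ^ m := rpow_pos_of_pos hθ m
  have hθm' : (0:ℝ) < θ ^ (-m) := rpow_pos_of_pos hθ (-m)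
  have hid : θ ^ (-m) * θ ^ m = 1 := by
    rw [← Real.rpow_add hθ]; simp
  constructor
  · calc L / 2 * θ ^ (-m) = θ ^ (-m) * (L / 2) := by ring
      _ ≤ θ ^ (-m) * (θ ^ m * (ℙ {ω | θ < h₀ ω / h₁ ω}).toReal) :=
          mul_le_mul_of_nonneg_left h3.le hθm'.le
      _ = (ℙ {ω | θ < h₀ ω / h₁ ω}).toReal := by rw [← mul_assoc, hid, one_mul]
  · calc (ℙ {ω | θ < h₀ ω / h₁ ω}).toReal
        = θ ^ (-m) * (θ ^ m * (ℙ {ω | θ < h₀ ω / h₁ ω}).toReal) := by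
          rw [← mul_assoc, hid, one_mul]
      _ ≤ θ ^ (-m) * (2 * L) := mul_le_mul_of_nonneg_left h2.le hθm'.le
      _ = 2 * L * θ ^ (-m) := by ring
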